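/- Let S be a locally maximal product-free set in a finite group G. If a ∈ S but a⁻¹ ∉ S, then a⁻¹ ∈ SS ∪ √S, where √S = {x ∈ G : x² ∈ S}. -/
import Mathlib


open Pointwise

/-- `S` is product-free if `S ∩ SS = ∅`. -/
def ProductFree {G : Type*} [Group G] (S : Set G) : Prop :=
  Disjoint S (S * S)

/-- `S` is locally maximal product-free if it is product-free and not properly
contained in any product-free set. -/
def LocallyMaximalPF {G : Type*} [Group G] (S : Set G) : Prop :=
  ProductFree S ∧ ∀ T : Set G, ProductFree T → S ⊆ T → S = T

/-- `S` fills `G` (is complete) if every non-identity element lies in `S ∪ SS`. -/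
def Fills {G : Type*} [Group G] (S : Set G) : Prop :=
  ∀ g : G, g ≠ 1 → g ∈ S ∪ S * S

/-- `G` is filled if every locally maximal product-free set fills `G`. -/
def Filled (G : Type*) [Group G] : Prop :=
  ∀ S : Set G, LocallyMaximalPF S → Fills S

theorem inv_mem_SS_or_sqrt {G : Type*} [Group G] [Finite G] (S : Set G)
    (hS : LocallyMaximalPF S) (a : G) (ha : a ∈ S) (ha' : a⁻¹ ∉ S) :
    a⁻¹ ∈ S * S ∪ {x : G | x ^ 2 ∈ S} := by
  obtain ⟨hpf, hmax⟩ := hS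
  have hone : (1 : G) ∉ S := by
    intro h1
    have : (1 : G) ∈ S * S := by
      have := Set.mul_mem_mul h1 h1
      rwa [mul_one] at this
    exact Set.disjoint_left.mp hpf h1 this
  have hT : ¬ ProductFree (insert a⁻¹ S) := by
    intro h
    exact ha' (by rw [hmax _ h (Set.subset_insert _ _)]; exact Set.mem_insert _ _)
  rw [ProductFree, Set.not_disjoint_iff] at hT
  obtain ⟨g, hg, hg2⟩ := hT
  rw [Set.mem_mul] at hg2
  obtain ⟨x, hx, y, hy, hxy⟩ := hg2
  simp only [Set.mem_insert_iff] at hx hy hg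
  rcases hx with hx | hx <;> rcases hy with hy | hy <;> rcases hg with hgi | hgS
  · -- a⁻¹ * a⁻¹ = a⁻¹ ⇒ a⁻¹ = 1 ⇒ 1 ∈ S
    subst hx; subst hy; subst hgi
    have h1 : a⁻¹ = 1 := by
      have := hxy
      nth_rewrite 3 [show a⁻¹ = 1 * a⁻¹ by rw [one_mul]] at this
      exact mul_right_cancel this
    rw [inv_eq_one] at h1
    exact absurd (h1 ▸ ha) hone
  · subst hx; subst hy
    right
    show (a⁻¹) ^ 2 ∈ S
    rw [pow_two, hxy]; exact hgS
  · subst hx; subst hgi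
    have h1 : y = 1 := by
      have := hxy
      nth_rewrite 2 [show a⁻¹ = a⁻¹ * 1 by rw [mul_one]] at this
      exact mul_left_cancel this
    exact absurd (h1 ▸ hy) hone
  · subst hx
    have hy' : y = a * g := by rw [← hxy, ← mul_assoc, mul_inv_cancel, one_mul]
    exact absurd (Set.mul_mem_mul ha hgS) (fun h => Set.disjoint_left.mp hpf hy (hy' ▸ h))
  · subst hy; subst hgi
    have h1 : x = 1 := by
      have := hxy
      nth_rewrite 2 [show a⁻¹ = 1 * a⁻¹ by rw [one_mul]] at this
      exact mul_right_cancel this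
    exact absurd (h1 ▸ hx) hone
  · subst hy
    have hx' : x = g * a := by rw [← hxy, mul_assoc, inv_mul_cancel, mul_one]
    exact absurd (Set.mul_mem_mul hgS ha) (fun h => Set.disjoint_left.mp hpf hx (hx' ▸ h))
  · subst hgi
    exact Or.inl (hxy ▸ Set.mul_mem_mul hx hy)
  · exact absurd (hxy ▸ Set.mul_mem_mul hx hy) (fun h => Set.disjoint_left.mp hpf hgS h)
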